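/- Let (G₂,σ₂) be a properly 2-colored digraph with vertex set V₂, let ℓ ≥ 3, and let (G_ℓ,σ_ℓ) be obtained from (G₂,σ₂) by adding ℓ−2 new vertices with pairwise distinct colors not occurring in σ₂(V₂), each made a hub-vertex (i.e., with arcs in both directions to every other vertex of G_ℓ). Then, for each modification operation ⊙ ∈ {deletion −, completion +, editing △} and every integer k, there exists an arc set F₂ over V₂ with |F₂| ≤ k such that (G₂ ⊙ F₂, σ₂) is a best match graph if and only if there exists an arc set F over V(G_ℓ) with |F| ≤ k such that (G_ℓ ⊙ F, σ_ℓ) is a best match graph. -/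

import Mathlib

/-- A rooted (phylogenetic) tree on leaf set `V`, encoded by its hierarchy of
clusters `L(T(v))`, `v ∈ V(T)`: a rooted tree on leaf set `V` corresponds
exactly to a family of nonempty, pairwise compatible subsets of `V` containing
all singletons and `V` itself.  Together with a coloring `σ : V → M` this is a
leaf-colored tree. -/
structure PhyloTree (V : Type) where
  clusters : Set (Set V)
  compat : ∀ p ∈ clusters, ∀ q ∈ clusters, p ⊆ q ∨ q ⊆ p ∨ p ∩ q = ∅
  singleton_mem : ∀ v : V, {v} ∈ clusters
  univ_mem : Set.univ ∈ clusters
  nonempty_mem : ∀ p ∈ clusters, p.Nonempty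

namespace PhyloTree

variable {V M : Type}

/-- The cluster `L(T(lca(x,y)))` of the last common ancestor of `x` and `y`;
for inner vertices `u,v` of a tree one has `u ⪯_T v ↔ L(T(u)) ⊆ L(T(v))`. -/
def lcaSet (T : PhyloTree V) (x y : V) : Set V :=
  ⋂₀ {p : Set V | p ∈ T.clusters ∧ x ∈ p ∧ y ∈ p}

/-- `T` displays the triple `xy|z`, i.e. `lca(x,y) ≺ lca(x,z) = lca(y,z)`. -/
def Displays (T : PhyloTree V) (x y z : V) : Prop :=
  T.lcaSet x y ⊂ T.lcaSet x z ∧ T.lcaSet x z = T.lcaSet y z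

/-- `y` is a best match of `x` in the leaf-colored tree `(T,σ)`. -/
def BestMatch (T : PhyloTree V) (σ : V → M) (x y : V) : Prop :=
  σ x ≠ σ y ∧ ∀ y' : V, σ y' = σ y → T.lcaSet x y ⊆ T.lcaSet x y'

end PhyloTree

variable {V M : Type}

/-- `(T,σ)` explains `(G,σ)`, i.e. `(G,σ) = G(T,σ)`. -/
def Explains (T : PhyloTree V) (σ : V → M) (G : V → V → Prop) : Prop :=
  ∀ x y : V, G x y ↔ T.BestMatch σ x y

/-- `(G,σ)` is a best match graph. -/
def IsBMG (G : V → V → Prop) (σ : V → M) : Prop :=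
  ∃ T : PhyloTree V, Explains T σ G

/-- The triple `xy|y'` is informative for `(G,σ)`. -/
def InformativeTriple (G : V → V → Prop) (σ : V → M) (x y y' : V) : Prop :=
  x ≠ y ∧ x ≠ y' ∧ y ≠ y' ∧ σ x ≠ σ y ∧ σ y = σ y' ∧ G x y ∧ ¬ G x y'

/-- The triple `xy|y'` is forbidden for `(G,σ)`. -/
def ForbiddenTriple (G : V → V → Prop) (σ : V → M) (x y y' : V) : Prop :=
  x ≠ y ∧ x ≠ y' ∧ y ≠ y' ∧ σ x ≠ σ y ∧ σ y = σ y' ∧ G x y ∧ G x y'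

/-- `(G,σ)` is sf-colored: `σ` is proper and every vertex has an out-neighbor
of every color present in the graph other than its own. -/
def SfColored (G : V → V → Prop) (σ : V → M) : Prop :=
  (∀ x y : V, G x y → σ x ≠ σ y) ∧
  ∀ (x : V) (s : M), (∃ v : V, σ v = s) → s ≠ σ x → ∃ y : V, σ y = s ∧ G x y

/-- The three arc modification operations: deletion, completion, editing. -/
inductive ModOp
  | del
  | comp
  | edit

/-- The modified arc relation `G ⊙ F` for each modification operation. -/
def applyMod {W : Type} : ModOp → (W → W → Prop) → Finset (W × W) → (W → W → Prop)
  | ModOp.del, E, F => fun u v => E u v ∧ (u, v) ∉ F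
  | ModOp.comp, E, F => fun u v => E u v ∨ (u, v) ∈ F
  | ModOp.edit, E, F => fun u v => (E u v ∧ (u, v) ∉ F) ∨ (¬ E u v ∧ (u, v) ∈ F)

/-- Validity of a modification set `F` for the respective operation:
deletion sets consist of arcs, completion sets of non-arcs (and non-loops),
edit sets of non-loops. -/
def validMod {W : Type} : ModOp → (W → W → Prop) → Finset (W × W) → Prop
  | ModOp.del, E, F => ∀ p ∈ F, E p.1 p.2
  | ModOp.comp, E, F => ∀ p ∈ F, ¬ E p.1 p.2 ∧ p.1 ≠ p.2
  | ModOp.edit, _, F => ∀ p ∈ F, p.1 ≠ p.2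

/-- The graph `G_ℓ` obtained from `G₂` by adding `n` new vertices, each of
which is a hub-vertex. -/
def hubExt {V₂ : Type} (G₂ : V₂ → V₂ → Prop) (n : ℕ) :
    (V₂ ⊕ Fin n) → (V₂ ⊕ Fin n) → Prop
  | Sum.inl a, Sum.inl b => G₂ a b
  | Sum.inl _, Sum.inr _ => True
  | Sum.inr _, Sum.inl _ => True
  | Sum.inr i, Sum.inr j => i ≠ j

/-- The coloring of `G_ℓ`: old vertices keep their color, the `n` new hub
vertices receive pairwise distinct new colors. -/
def hubColor {V₂ M : Type} (σ₂ : V₂ → M) (n : ℕ) : (V₂ ⊕ Fin n) → (M ⊕ Fin n)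
  | Sum.inl v => Sum.inl (σ₂ v)
  | Sum.inr i => Sum.inr i

section AuxLemmas

open Sum

variable {W : Type}

lemma mem_lcaSet_left (T : PhyloTree W) (x y : W) : x ∈ T.lcaSet x y :=
  Set.mem_sInter.mpr fun _ hp => hp.2.1

lemma mem_lcaSet_right (T : PhyloTree W) (x y : W) : y ∈ T.lcaSet x y :=
  Set.mem_sInter.mpr fun _ hp => hp.2.2

lemma lcaSet_subset (T : PhyloTree W) {x y : W} {p : Set W}
    (hp : p ∈ T.clusters) (hx : x ∈ p) (hy : y ∈ p) : T.lcaSet x y ⊆ p :=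
  Set.sInter_subset_of_mem ⟨hp, hx, hy⟩

lemma lcaSet_mem [Finite W] (T : PhyloTree W) (x y : W) :
    T.lcaSet x y ∈ T.clusters := by
  classical
  set S : Set (Set W) := {p | p ∈ T.clusters ∧ x ∈ p ∧ y ∈ p} with hSdef
  have hfin : S.Finite := Set.toFinite S
  have hne : S.Nonempty := ⟨Set.univ, T.univ_mem, trivial, trivial⟩
  obtain ⟨m, hmS, hmin⟩ := hfin.exists_minimal hne
  have hmin' : ∀ p ∈ S, p ⊆ m → m = p := fun p hp h => subset_antisymm (hmin hp h) h
  have hsub : ∀ p ∈ S, m ⊆ p := by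
    intro p hp
    rcases T.compat m hmS.1 p hp.1 with h | h | h
    · exact h
    · exact (hmin' p hp h).le
    · exact absurd (Set.mem_inter hmS.2.1 hp.2.1) (h ▸ id)
  have : T.lcaSet x y = m := by
    apply subset_antisymm (Set.sInter_subset_of_mem hmS)
    exact Set.subset_sInter hsub
  rw [this]; exact hmS.1

lemma IsBMG.congr {M : Type} {σ : W → M} {G G' : W → W → Prop}
    (h : ∀ x y, G x y ↔ G' x y) : IsBMG G σ → IsBMG G' σ := by
  rintro ⟨T, hT⟩
  exact ⟨T, fun x y => (h x y).symm.trans (hT x y)⟩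

variable {V₂ : Type} {n : ℕ}

/-- The tree on `V₂ ⊕ Fin n` obtained from a tree on `V₂` by attaching
the `n` new leaves directly at the root. -/
def hubTree [Nonempty V₂] (T : PhyloTree V₂) (n : ℕ) : PhyloTree (V₂ ⊕ Fin n) where
  clusters := {q | q = Set.univ ∨ (∃ w, q = {w}) ∨ ∃ p ∈ T.clusters, q = Sum.inl '' p}
  compat := by
    rintro p hp q hq
    rcases hp with rfl | ⟨w, rfl⟩ | ⟨p', hp', rfl⟩
    · exact Or.inr (Or.inl (Set.subset_univ q))
    · by_cases hw : w ∈ q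
      · exact Or.inl (Set.singleton_subset_iff.mpr hw)
      · exact Or.inr (Or.inr (Set.singleton_inter_eq_empty.mpr hw))
    · rcases hq with rfl | ⟨w, rfl⟩ | ⟨q', hq', rfl⟩
      · exact Or.inl (Set.subset_univ _)
      · by_cases hw : w ∈ Sum.inl '' p'
        · exact Or.inr (Or.inl (Set.singleton_subset_iff.mpr hw))
        · exact Or.inr (Or.inr (Set.inter_singleton_eq_empty.mpr hw))
      · rcases T.compat p' hp' q' hq' with h | h | h
        · exact Or.inl (Set.image_mono h)
        · exact Or.inr (Or.inl (Set.image_mono h))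
        · refine Or.inr (Or.inr ?_)
          rw [← Set.image_inter Sum.inl_injective, h, Set.image_empty]
  singleton_mem := fun v => Or.inr (Or.inl ⟨v, rfl⟩)
  univ_mem := Or.inl rfl
  nonempty_mem := by
    rintro p (rfl | ⟨w, rfl⟩ | ⟨p', hp', rfl⟩)
    · exact Set.univ_nonempty
    · exact Set.singleton_nonempty w
    · exact (T.nonempty_mem p' hp').image _

lemma hubTree_lca_inl [Nonempty V₂] (T : PhyloTree V₂) (a b : V₂) :
    (hubTree T n).lcaSet (Sum.inl a) (Sum.inl b) = Sum.inl '' T.lcaSet a b := by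
  ext x
  rw [PhyloTree.lcaSet, Set.mem_sInter]
  constructor
  · intro h
    have hx : x ∈ Sum.inl '' (Set.univ : Set V₂) :=
      h _ ⟨Or.inr (Or.inr ⟨Set.univ, T.univ_mem, rfl⟩), ⟨a, trivial, rfl⟩, ⟨b, trivial, rfl⟩⟩
    obtain ⟨c, _, rfl⟩ := hx
    refine ⟨c, ?_, rfl⟩
    rw [PhyloTree.lcaSet, Set.mem_sInter]
    rintro p ⟨hp, hap, hbp⟩
    have := h (Sum.inl '' p) ⟨Or.inr (Or.inr ⟨p, hp, rfl⟩), ⟨a, hap, rfl⟩, ⟨b, hbp, rfl⟩⟩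
    obtain ⟨c', hc', hcc⟩ := this
    rwa [← Sum.inl_injective hcc]
  · rintro ⟨c, hc, rfl⟩ q ⟨hq, haq, hbq⟩
    rcases hq with rfl | ⟨w, rfl⟩ | ⟨p, hp, rfl⟩
    · trivial
    · have hwa : w = Sum.inl a := (Set.mem_singleton_iff.mp haq).symm
      have hba : b = a := Sum.inl_injective (by
        have := Set.mem_singleton_iff.mp hbq; rw [hwa] at this; exact this)
      have : c ∈ ({a} : Set V₂) := by
        apply lcaSet_subset T (T.singleton_mem a) rfl _ hc
        rw [hba]; rfl
      rw [hwa]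
      exact Set.mem_singleton_iff.mpr (congrArg Sum.inl this)
    · obtain ⟨a', ha', haa⟩ := haq
      obtain ⟨b', hb', hbb⟩ := hbq
      have ha : a ∈ p := by rwa [Sum.inl_injective haa] at ha'
      have hb : b ∈ p := by rwa [Sum.inl_injective hbb] at hb'
      exact ⟨c, lcaSet_subset T hp ha hb hc, rfl⟩

lemma hubTree_lca_inr_left [Nonempty V₂] (T : PhyloTree V₂) (i : Fin n)
    (y : V₂ ⊕ Fin n) (hy : y ≠ Sum.inr i) :
    (hubTree T n).lcaSet (Sum.inr i) y = Set.univ := by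
  apply subset_antisymm (Set.subset_univ _)
  intro x _
  rw [PhyloTree.lcaSet, Set.mem_sInter]
  rintro q ⟨hq, hiq, hyq⟩
  rcases hq with rfl | ⟨w, rfl⟩ | ⟨p, hp, rfl⟩
  · trivial
  · have hw : w = Sum.inr i := (Set.mem_singleton_iff.mp hiq).symm
    rw [hw] at hyq
    exact absurd (Set.mem_singleton_iff.mp hyq) hy
  · obtain ⟨c, _, hc⟩ := hiq
    exact absurd hc (by simp)

lemma hubTree_lca_inr_right [Nonempty V₂] (T : PhyloTree V₂) (i : Fin n)
    (y : V₂ ⊕ Fin n) (hy : y ≠ Sum.inr i) :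
    (hubTree T n).lcaSet y (Sum.inr i) = Set.univ := by
  apply subset_antisymm (Set.subset_univ _)
  intro x _
  rw [PhyloTree.lcaSet, Set.mem_sInter]
  rintro q ⟨hq, hyq, hiq⟩
  rcases hq with rfl | ⟨w, rfl⟩ | ⟨p, hp, rfl⟩
  · trivial
  · have hw : w = Sum.inr i := (Set.mem_singleton_iff.mp hiq).symm
    rw [hw] at hyq
    exact absurd (Set.mem_singleton_iff.mp hyq) hy
  · obtain ⟨c, _, hc⟩ := hiq
    exact absurd hc (by simp)

/-- Key lemma, forward direction: hub extension of a BMG is a BMG. -/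
lemma isBMG_hubExt {M : Type} [Nonempty V₂] {H : V₂ → V₂ → Prop} {σ₂ : V₂ → M}
    (h : IsBMG H σ₂) : IsBMG (hubExt H n) (hubColor σ₂ n) := by
  obtain ⟨T, hT⟩ := h
  refine ⟨hubTree T n, ?_⟩
  rintro (a | i) (b | j)
  · -- inl a, inl b
    rw [show hubExt H n (Sum.inl a) (Sum.inl b) = H a b from rfl, hT a b]
    constructor
    · rintro ⟨hne, hall⟩
      refine ⟨by simpa [hubColor] using hne, ?_⟩
      rintro (b' | j') hy'
      · have hb' : σ₂ b' = σ₂ b := by simpa [hubColor] using hy'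
        rw [hubTree_lca_inl, hubTree_lca_inl]
        exact Set.image_mono (hall b' hb')
      · simp [hubColor] at hy'
    · rintro ⟨hne, hall⟩
      refine ⟨by simpa [hubColor] using hne, ?_⟩
      intro b' hb'
      have := hall (Sum.inl b') (by simp [hubColor, hb'])
      rw [hubTree_lca_inl, hubTree_lca_inl] at this
      exact (Set.image_subset_image_iff Sum.inl_injective).mp this
  · -- inl a, inr j : True
    constructor
    · intro _
      refine ⟨by simp [hubColor], ?_⟩
      rintro (b' | j') hy'
      · simp [hubColor] at hy'
      · have : j' = j := by simpa [hubColor] using hy'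
        subst this; exact le_refl _
    · intro _; trivial
  · -- inr i, inl b : True
    constructor
    · intro _
      refine ⟨by simp [hubColor], ?_⟩
      rintro (b' | j') hy'
      · rw [hubTree_lca_inr_left T i _ (by simp), hubTree_lca_inr_left T i _ (by simp)]
      · simp [hubColor] at hy'
    · intro _; trivial
  · -- inr i, inr j : i ≠ j
    rw [show hubExt H n (Sum.inr i) (Sum.inr j) = (i ≠ j) from rfl]
    constructor
    · intro hij
      refine ⟨by simp [hubColor, hij], ?_⟩
      rintro (b' | j') hy'
      · simp [hubColor] at hy'
      · have : j' = j := by simpa [hubColor] using hy'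
        subst this; exact le_refl _
    · rintro ⟨hne, _⟩ rfl
      exact hne rfl

/-- The tree on `V₂` obtained by restricting a tree on `V₂ ⊕ Fin n`. -/
def restTree [Nonempty V₂] (T : PhyloTree (V₂ ⊕ Fin n)) : PhyloTree V₂ where
  clusters := {q | (∃ p ∈ T.clusters, q = Sum.inl ⁻¹' p) ∧ q.Nonempty}
  compat := by
    rintro q1 ⟨⟨p1, hp1, rfl⟩, _⟩ q2 ⟨⟨p2, hp2, rfl⟩, _⟩
    rcases T.compat p1 hp1 p2 hp2 with h | h | h
    · exact Or.inl (Set.preimage_mono h)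
    · exact Or.inr (Or.inl (Set.preimage_mono h))
    · refine Or.inr (Or.inr ?_)
      rw [← Set.preimage_inter, h, Set.preimage_empty]
  singleton_mem := fun v =>
    ⟨⟨{Sum.inl v}, T.singleton_mem _, by ext x; simp⟩, ⟨v, rfl⟩⟩
  univ_mem := ⟨⟨Set.univ, T.univ_mem, by simp⟩, Set.univ_nonempty⟩
  nonempty_mem := fun _ hp => hp.2

lemma restTree_lca [Nonempty V₂] (T : PhyloTree (V₂ ⊕ Fin n)) (a b : V₂) :
    (restTree T).lcaSet a b = Sum.inl ⁻¹' (T.lcaSet (Sum.inl a) (Sum.inl b)) := by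
  ext x
  rw [PhyloTree.lcaSet, Set.mem_sInter]
  constructor
  · intro h
    rw [Set.mem_preimage, PhyloTree.lcaSet, Set.mem_sInter]
    rintro p ⟨hp, hap, hbp⟩
    exact h (Sum.inl ⁻¹' p) ⟨⟨⟨p, hp, rfl⟩, ⟨a, hap⟩⟩, hap, hbp⟩
  · rintro h q ⟨⟨⟨p, hp, rfl⟩, _⟩, haq, hbq⟩
    rw [Set.mem_preimage, PhyloTree.lcaSet, Set.mem_sInter] at h
    exact h p ⟨hp, haq, hbq⟩

/-- Key lemma, reverse direction: restriction of a BMG on a hub extension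
vertex set to the original vertices is a BMG. -/
lemma isBMG_restrict {M : Type} [Fintype V₂] [Nonempty V₂]
    {H : (V₂ ⊕ Fin n) → (V₂ ⊕ Fin n) → Prop} {σ₂ : V₂ → M}
    (h : IsBMG H (hubColor σ₂ n)) :
    IsBMG (fun a b => H (Sum.inl a) (Sum.inl b)) σ₂ := by
  obtain ⟨T, hT⟩ := h
  refine ⟨restTree T, ?_⟩
  intro a b
  show H (Sum.inl a) (Sum.inl b) ↔ _
  rw [hT (Sum.inl a) (Sum.inl b)]
  constructor
  · rintro ⟨hne, hall⟩
    refine ⟨by simpa [hubColor] using hne, ?_⟩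
    intro b' hb'
    rw [restTree_lca, restTree_lca]
    exact Set.preimage_mono (hall (Sum.inl b') (by simp [hubColor, hb']))
  · rintro ⟨hne, hall⟩
    refine ⟨by simpa [hubColor] using hne, ?_⟩
    rintro (b' | j') hy'
    · have hb' : σ₂ b' = σ₂ b := by simpa [hubColor] using hy'
      have key := hall b' hb'
      rw [restTree_lca, restTree_lca] at key
      have hbmem : Sum.inl b ∈ T.lcaSet (Sum.inl a) (Sum.inl b') :=
        key (mem_lcaSet_right T _ _)
      exact lcaSet_subset T (lcaSet_mem T _ _) (mem_lcaSet_left T _ _) hbmem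
    · simp [hubColor] at hy'

end AuxLemmas

/-- For a properly 2-colored digraph `(G₂,σ₂)`, `ℓ ≥ 3`, and the
`ℓ`-colored graph `(G_ℓ,σ_ℓ)` obtained by adding `ℓ-2` hub-vertices with fresh
pairwise distinct colors: for each modification operation `⊙` and every `k`,
`(G₂,σ₂)` can be modified into a BMG with at most `k` operations iff
`(G_ℓ,σ_ℓ)` can. -/
theorem hub_extension_equiv {V₂ : Type} [Fintype V₂]
    (G₂ : V₂ → V₂ → Prop) (σ₂ : V₂ → Bool)
    (hproper : ∀ x y : V₂, G₂ x y → σ₂ x ≠ σ₂ y)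
    (hsurj : Function.Surjective σ₂)
    (ℓ : ℕ) (hℓ : 3 ≤ ℓ) :
    ∀ (op : ModOp) (k : ℕ),
      (∃ F₂ : Finset (V₂ × V₂),
        validMod op G₂ F₂ ∧ F₂.card ≤ k ∧ IsBMG (applyMod op G₂ F₂) σ₂) ↔
      (∃ F : Finset ((V₂ ⊕ Fin (ℓ - 2)) × (V₂ ⊕ Fin (ℓ - 2))),
        validMod op (hubExt G₂ (ℓ - 2)) F ∧ F.card ≤ k ∧
        IsBMG (applyMod op (hubExt G₂ (ℓ - 2)) F) (hubColor σ₂ (ℓ - 2))) := by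
  classical
  have hV : Nonempty V₂ := ⟨(hsurj true).choose⟩
  intro op k
  set n := ℓ - 2 with hn
  let emb : (V₂ × V₂) ↪ ((V₂ ⊕ Fin n) × (V₂ ⊕ Fin n)) :=
    ⟨fun p => (Sum.inl p.1, Sum.inl p.2), by
      rintro ⟨a, b⟩ ⟨c, d⟩ h
      simp only [Prod.mk.injEq, Sum.inl.injEq] at h
      exact Prod.ext h.1 h.2⟩
  constructor
  · -- forward direction
    rintro ⟨F₂, hval, hcard, hbmg⟩
    have hmem2 : ∀ (x y : V₂ ⊕ Fin n), (x, y) ∈ F₂.map emb ↔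
        ∃ a b, x = Sum.inl a ∧ y = Sum.inl b ∧ (a, b) ∈ F₂ := by
      intro x y
      constructor
      · intro h
        obtain ⟨⟨a, b⟩, hq, hqe⟩ := Finset.mem_map.mp h
        exact ⟨a, b, congrArg Prod.fst hqe.symm, congrArg Prod.snd hqe.symm, hq⟩
      · rintro ⟨a, b, rfl, rfl, h⟩
        exact Finset.mem_map_of_mem emb h
    have hmemll : ∀ a b : V₂, ((Sum.inl a : V₂ ⊕ Fin n), (Sum.inl b : V₂ ⊕ Fin n)) ∈ F₂.map emb
        ↔ (a, b) ∈ F₂ := by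
      intro a b
      rw [hmem2]
      constructor
      · rintro ⟨a', b', ha, hb, h⟩
        rwa [Sum.inl_injective ha, Sum.inl_injective hb]
      · intro h; exact ⟨a, b, rfl, rfl, h⟩
    refine ⟨F₂.map emb, ?_, by rw [Finset.card_map]; exact hcard, ?_⟩
    · cases op with
      | del =>
        rintro p hp
        obtain ⟨q, hq, rfl⟩ := Finset.mem_map.mp hp
        exact hval q hq
      | comp =>
        rintro p hp
        obtain ⟨q, hq, rfl⟩ := Finset.mem_map.mp hp
        exact ⟨(hval q hq).1, fun h => (hval q hq).2 (Sum.inl_injective h)⟩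
      | edit =>
        rintro p hp
        obtain ⟨q, hq, rfl⟩ := Finset.mem_map.mp hp
        intro h
        exact (hval q hq) (Sum.inl_injective h)
    · refine IsBMG.congr ?_ (isBMG_hubExt hbmg)
      rintro (a | i) (b | j) <;> cases op <;>
        simp only [applyMod, hubExt, hmemll, hmem2] <;>
        simp <;> tauto
  · -- reverse direction
    rintro ⟨F, hval, hcard, hbmg⟩
    refine ⟨F.preimage emb emb.injective.injOn, ?_, ?_, ?_⟩
    · cases op with
      | del =>
        intro p hp
        exact hval (emb p) (Finset.mem_preimage.mp hp)
      | comp =>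
        intro p hp
        have h := hval (emb p) (Finset.mem_preimage.mp hp)
        exact ⟨h.1, fun he => h.2 (congrArg Sum.inl he)⟩
      | edit =>
        intro p hp
        have h := hval (emb p) (Finset.mem_preimage.mp hp)
        exact fun he => h (congrArg Sum.inl he)
    · have hsub : (F.preimage emb emb.injective.injOn).map emb ⊆ F := by
        intro p hp
        obtain ⟨q, hq, rfl⟩ := Finset.mem_map.mp hp
        exact Finset.mem_preimage.mp hq
      calc (F.preimage emb emb.injective.injOn).card
          = ((F.preimage emb emb.injective.injOn).map emb).card := (Finset.card_map emb).symm
        _ ≤ F.card := Finset.card_le_card hsub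
        _ ≤ k := hcard
    · refine IsBMG.congr ?_ (isBMG_restrict hbmg)
      intro a b
      have hmem : ((a, b) ∈ F.preimage emb emb.injective.injOn) ↔
          ((Sum.inl a, Sum.inl b) ∈ F) := Finset.mem_preimage
      cases op <;> simp only [applyMod, hubExt, hmem]
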